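/- Call a subset S of the set of Lagrangian subspaces of (ℝ^{2n}, ω) a circle if there exist g ∈ Sp(2n,ℝ) and a nondegenerate symmetric real n×n matrix B such that S = {g·Γ_{λB} : λ ∈ ℝ} ∪ {g·L∞}, where Γ_M = {(x, Mx) : x ∈ ℝⁿ} and L∞ = {0} × ℝⁿ, and g acts on subspaces. Then: (a) any three pairwise transverse Lagrangian subspaces L1, L2, L3 of (ℝ^{2n}, ω) are contained in at least one circle; (b) if two circles S and S' both contain three pairwise transverse Lagrangians L1, L2, L3, then S = S'. In particular, three pairwise transverse Lagrangians are contained in a unique circle. -/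

import Mathlib

open Module Submodule

/-- `ℝ^{2n} = ℝⁿ × ℝⁿ`. -/
abbrev SympV (n : ℕ) := (Fin n → ℝ) × (Fin n → ℝ)

/-- The standard symplectic form `ω((x,y),(x',y')) = ⟨x,y'⟩ - ⟨y,x'⟩`. -/
def stdOmega (n : ℕ) (p q : SympV n) : ℝ :=
  (∑ i, p.1 i * q.2 i) - ∑ i, p.2 i * q.1 i

namespace SP
variable {n : ℕ}

lemma omega_add_left (p p' q : SympV n) :
    stdOmega n (p + p') q = stdOmega n p q + stdOmega n p' q := by
  simp [stdOmega, add_mul, Finset.sum_add_distrib]; ring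

lemma omega_add_right (p q q' : SympV n) :
    stdOmega n p (q + q') = stdOmega n p q + stdOmega n p q' := by
  simp [stdOmega, mul_add, Finset.sum_add_distrib]; ring

lemma omega_smul_left (c : ℝ) (p q : SympV n) :
    stdOmega n (c • p) q = c * stdOmega n p q := by
  simp [stdOmega, Finset.mul_sum, mul_assoc, mul_sub]

lemma omega_smul_right (c : ℝ) (p q : SympV n) :
    stdOmega n p (c • q) = c * stdOmega n p q := by
  simp only [stdOmega, Prod.smul_fst, Prod.smul_snd, Pi.smul_apply, smul_eq_mul]
  rw [mul_sub, Finset.mul_sum, Finset.mul_sum]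
  congr 1 <;> exact Finset.sum_congr rfl fun i _ => by ring

lemma omega_neg (p q : SympV n) : stdOmega n p q = - stdOmega n q p := by
  simp only [stdOmega, neg_sub]
  rw [Finset.sum_congr rfl (fun i (_ : i ∈ Finset.univ) => mul_comm (p.1 i) (q.2 i)),
    Finset.sum_congr rfl (fun i (_ : i ∈ Finset.univ) => mul_comm (p.2 i) (q.1 i))]

/-- ω as a bilinear map. -/
noncomputable def omegaBilin (n : ℕ) : SympV n →ₗ[ℝ] SympV n →ₗ[ℝ] ℝ :=
  LinearMap.mk₂ ℝ (stdOmega n) omega_add_left omega_smul_left omega_add_right omega_smul_right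

@[simp] lemma omegaBilin_apply (p q : SympV n) : omegaBilin n p q = stdOmega n p q := rfl

lemma omega_nondeg (p : SympV n) (h : ∀ q, stdOmega n q p = 0) : p = 0 := by
  have h1 := h (-p.2, p.1)
  simp [stdOmega] at h1
  have h2 : (∑ i, p.1 i * p.1 i) + ∑ i, p.2 i * p.2 i = 0 := by
    rw [← sub_eq_zero] at *
    linarith [h1]
  have hn1 : (0:ℝ) ≤ ∑ i, p.1 i * p.1 i := Finset.sum_nonneg fun i _ => mul_self_nonneg _
  have hn2 : (0:ℝ) ≤ ∑ i, p.2 i * p.2 i := Finset.sum_nonneg fun i _ => mul_self_nonneg _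
  have e1 : ∑ i, p.1 i * p.1 i = 0 := by linarith
  have e2 : ∑ i, p.2 i * p.2 i = 0 := by linarith
  have z1 : ∀ i, p.1 i = 0 := fun i => by
    have := (Finset.sum_eq_zero_iff_of_nonneg (fun i _ => mul_self_nonneg (p.1 i))).1 e1 i
      (Finset.mem_univ i)
    exact mul_self_eq_zero.1 this
  have z2 : ∀ i, p.2 i = 0 := fun i => by
    have := (Finset.sum_eq_zero_iff_of_nonneg (fun i _ => mul_self_nonneg (p.2 i))).1 e2 i
      (Finset.mem_univ i)
    exact mul_self_eq_zero.1 this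
  exact Prod.ext (funext z1) (funext z2)

end SP


/-- A Lagrangian: an `n`-dimensional subspace on which `ω` vanishes identically. -/
def IsLagrangian (n : ℕ) (L : Submodule ℝ (SympV n)) : Prop :=
  finrank ℝ L = n ∧ ∀ u ∈ L, ∀ v ∈ L, stdOmega n u v = 0

/-- Membership in `Sp(2n,ℝ)` for a linear automorphism of `ℝ^{2n}`. -/
def IsSymplectic (n : ℕ) (g : SympV n ≃ₗ[ℝ] SympV n) : Prop :=
  ∀ u v, stdOmega n (g u) (g v) = stdOmega n u v

/-- `Γ_M = {(x, Mx) : x ∈ ℝⁿ}`. -/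
def matGraph (n : ℕ) (M : Matrix (Fin n) (Fin n) ℝ) : Submodule ℝ (SympV n) :=
  LinearMap.graph M.mulVecLin

/-- `L∞ = {0} × ℝⁿ`. -/
def lagInfty (n : ℕ) : Submodule ℝ (SympV n) :=
  (⊥ : Submodule ℝ (Fin n → ℝ)).prod (⊤ : Submodule ℝ (Fin n → ℝ))

/-- A circle of Lagrangians: the `Sp(2n,ℝ)`-image of
`{Γ_{λB} : λ ∈ ℝ} ∪ {L∞}` for a nondegenerate symmetric matrix `B`. -/
def IsCircle (n : ℕ) (S : Set (Submodule ℝ (SympV n))) : Prop :=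
  ∃ g : SympV n ≃ₗ[ℝ] SympV n, IsSymplectic n g ∧
    ∃ B : Matrix (Fin n) (Fin n) ℝ, B.IsSymm ∧ IsUnit B.det ∧
      S = (Set.range fun lam : ℝ =>
            Submodule.map (g : SympV n →ₗ[ℝ] SympV n) (matGraph n (lam • B))) ∪
          {Submodule.map (g : SympV n →ₗ[ℝ] SympV n) (lagInfty n)}

namespace SP2
variable {n : ℕ}

lemma mem_matGraph {M : Matrix (Fin n) (Fin n) ℝ} {p : SympV n} :
    p ∈ matGraph n M ↔ p.2 = M.mulVec p.1 := by
  simp [matGraph, LinearMap.mem_graph_iff]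

lemma mem_lagInfty {p : SympV n} : p ∈ lagInfty n ↔ p.1 = 0 := by
  simp [lagInfty, Submodule.mem_prod]

lemma symp_symm {g : SympV n ≃ₗ[ℝ] SympV n} (hg : IsSymplectic n g) :
    IsSymplectic n g.symm := fun u v => by
  conv_rhs => rw [← g.apply_symm_apply u, ← g.apply_symm_apply v, hg]

lemma symp_trans {g h : SympV n ≃ₗ[ℝ] SympV n} (hg : IsSymplectic n g)
    (hh : IsSymplectic n h) : IsSymplectic n (g.trans h) := fun u v => by
  rw [LinearEquiv.trans_apply, LinearEquiv.trans_apply, hh, hg]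

lemma map_symm_map (e : SympV n ≃ₗ[ℝ] SympV n) (L : Submodule ℝ (SympV n)) :
    Submodule.map (e.symm : SympV n →ₗ[ℝ] SympV n)
      (Submodule.map (e : SympV n →ₗ[ℝ] SympV n) L) = L := by
  ext p
  constructor
  · rintro ⟨q, ⟨r, hr, rfl⟩, rfl⟩
    simpa using hr
  · intro hp
    exact ⟨e p, ⟨p, hp, rfl⟩, by simp⟩

lemma map_map (e f : SympV n ≃ₗ[ℝ] SympV n) (L : Submodule ℝ (SympV n)) :
    Submodule.map ((e.trans f) : SympV n →ₗ[ℝ] SympV n) L =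
      Submodule.map (f : SympV n →ₗ[ℝ] SympV n)
        (Submodule.map (e : SympV n →ₗ[ℝ] SympV n) L) := by
  rw [← Submodule.map_comp]; rfl

lemma lagrangian_map {g : SympV n ≃ₗ[ℝ] SympV n} (hg : IsSymplectic n g)
    {L : Submodule ℝ (SympV n)} (hL : IsLagrangian n L) :
    IsLagrangian n (Submodule.map (g : SympV n →ₗ[ℝ] SympV n) L) := by
  refine ⟨?_, ?_⟩
  · rw [LinearEquiv.finrank_map_eq]; exact hL.1
  · rintro u ⟨p, hp, rfl⟩ v ⟨q, hq, rfl⟩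
    rw [show (g : SympV n →ₗ[ℝ] SympV n) p = g p from rfl,
      show (g : SympV n →ₗ[ℝ] SympV n) q = g q from rfl, hg]
    exact hL.2 p hp q hq

lemma isCompl_map (e : SympV n ≃ₗ[ℝ] SympV n) {A B : Submodule ℝ (SympV n)}
    (h : IsCompl A B) :
    IsCompl (Submodule.map (e : SympV n →ₗ[ℝ] SympV n) A)
      (Submodule.map (e : SympV n →ₗ[ℝ] SympV n) B) := by
  have := (Submodule.orderIsoMapComap e).isCompl h
  simpa [Submodule.orderIsoMapComap] using this

end SP2

namespace SP3
open SP SP2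
variable {n : ℕ}

/-- A Lagrangian transverse to `L∞` is the graph of a symmetric matrix. -/
lemma exists_graph {L : Submodule ℝ (SympV n)} (hL : IsLagrangian n L)
    (hc : IsCompl L (lagInfty n)) :
    ∃ A : Matrix (Fin n) (Fin n) ℝ, A.IsSymm ∧ L = matGraph n A := by
  classical
  set pr : L →ₗ[ℝ] (Fin n → ℝ) :=
    (LinearMap.fst ℝ (Fin n → ℝ) (Fin n → ℝ)).comp L.subtype with hpr
  have hinj : Function.Injective pr := by
    rw [← LinearMap.ker_eq_bot]
    rw [LinearMap.ker_eq_bot']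
    rintro ⟨p, hp⟩ h0
    have hp1 : p.1 = 0 := h0
    have : p ∈ lagInfty n := mem_lagInfty.2 hp1
    have := (Submodule.disjoint_def.1 hc.disjoint) p hp this
    exact Subtype.ext this
  have hsurj : Function.Surjective pr := by
    have h1 : finrank ℝ L = finrank ℝ (Fin n → ℝ) := by
      rw [hL.1, Module.finrank_fin_fun]
    exact (LinearMap.injective_iff_surjective_of_finrank_eq_finrank h1).1 hinj
  set PP : L ≃ₗ[ℝ] (Fin n → ℝ) := LinearEquiv.ofBijective pr ⟨hinj, hsurj⟩ with hPP
  set sg : (Fin n → ℝ) →ₗ[ℝ] (Fin n → ℝ) :=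
    (LinearMap.snd ℝ (Fin n → ℝ) (Fin n → ℝ)).comp
      (L.subtype.comp PP.symm.toLinearMap) with hsg
  set A := LinearMap.toMatrix' sg with hA
  have hmv : ∀ x, A.mulVec x = sg x := by
    intro x
    rw [← Matrix.toLin'_apply, hA, Matrix.toLin'_toMatrix']
  have hPPsymm : ∀ p (hp : p ∈ L), PP.symm p.1 = ⟨p, hp⟩ := by
    intro p hp
    apply PP.injective
    rw [PP.apply_symm_apply]
    rfl
  have hsgval : ∀ p (hp : p ∈ L), sg p.1 = p.2 := by
    intro p hp
    rw [hsg]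
    simp only [LinearMap.comp_apply, LinearEquiv.coe_toLinearMap]
    rw [hPPsymm p hp]
    rfl
  have hmem : ∀ x, (x, sg x) ∈ L := by
    intro x
    have h1 : ((PP.symm x : L) : SympV n).1 = x := PP.apply_symm_apply x
    have h2 : sg x = ((PP.symm x : L) : SympV n).2 := by
      conv_lhs => rw [← h1]
      rw [hsgval _ (PP.symm x).2]
    have : ((PP.symm x : L) : SympV n) = (x, sg x) := by
      rw [h2]; exact Prod.ext h1 rfl
    rw [← this]; exact (PP.symm x).2
  have hLG : L = matGraph n A := by
    ext p
    rw [mem_matGraph]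
    constructor
    · intro hp
      rw [hmv, hsgval p hp]
    · intro hp
      have : p = (p.1, sg p.1) := Prod.ext rfl (by rw [hp, hmv])
      rw [this]; exact hmem p.1
  refine ⟨A, ?_, hLG⟩
  -- symmetry
  have key : ∀ i j, A j i = A i j := by
    intro i j
    have h0 := hL.2 _ (hmem (Pi.single i 1)) _ (hmem (Pi.single j 1))
    have e1 : (∑ k : Fin n, (Pi.single i (1:ℝ) : Fin n → ℝ) k * sg (Pi.single j 1) k)
        = sg (Pi.single j 1) i := by
      simp [Pi.single_apply]
    have e2 : (∑ k : Fin n, sg (Pi.single i (1:ℝ)) k * (Pi.single j (1:ℝ) : Fin n → ℝ) k)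
        = sg (Pi.single i 1) j := by
      simp [Pi.single_apply]
    rw [stdOmega] at h0
    simp only at h0
    rw [e1, e2, sub_eq_zero] at h0
    have f1 : sg (Pi.single j 1) i = A i j := by
      rw [← hmv, Matrix.mulVec_single]; simp
    have f2 : sg (Pi.single i 1) j = A j i := by
      rw [← hmv, Matrix.mulVec_single]; simp
    rw [f1, f2] at h0
    exact h0.symm
  unfold Matrix.IsSymm
  ext i j
  rw [Matrix.transpose_apply]
  exact key i j

lemma graph_unit {A : Matrix (Fin n) (Fin n) ℝ}
    (hc : IsCompl (matGraph n A) (matGraph n 0)) : IsUnit A.det := by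
  rw [← Matrix.isUnit_iff_isUnit_det, ← Matrix.mulVec_injective_iff_isUnit]
  have key : ∀ x, A.mulVec x = 0 → x = 0 := by
    intro x hx
    have hmem1 : ((x, A.mulVec x) : SympV n) ∈ matGraph n A := mem_matGraph.2 rfl
    rw [hx] at hmem1
    have hmem2 : ((x, (0 : Fin n → ℝ)) : SympV n) ∈ matGraph n 0 :=
      mem_matGraph.2 (by rw [Matrix.zero_mulVec])
    have := Submodule.disjoint_def.1 hc.disjoint _ hmem1 hmem2
    exact congrArg Prod.fst this
  have hinj : Function.Injective A.mulVecLin := by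
    rw [← LinearMap.ker_eq_bot, LinearMap.ker_eq_bot']
    intro m hm
    exact key m hm
  intro x y h
  exact hinj (show A.mulVecLin x = A.mulVecLin y by simpa [Matrix.mulVecLin_apply] using h)

end SP3

namespace SP4
open SP SP2
variable {n : ℕ}

/-- The model circle. -/
def model (n : ℕ) (B : Matrix (Fin n) (Fin n) ℝ) : Set (Submodule ℝ (SympV n)) :=
  (Set.range fun lam : ℝ => matGraph n (lam • B)) ∪ {lagInfty n}

lemma stdOmega_eq_dot (p q : SympV n) :
    stdOmega n p q = dotProduct p.1 q.2 - dotProduct p.2 q.1 := rfl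

lemma symm_dot {C : Matrix (Fin n) (Fin n) ℝ} (hC : C.IsSymm) (x y : Fin n → ℝ) :
    dotProduct x (C.mulVec y) = dotProduct (C.mulVec x) y := by
  rw [Matrix.dotProduct_mulVec, ← Matrix.mulVec_transpose, hC.eq]

/-- Shear `(x,y) ↦ (x, y + Cx)`. -/
noncomputable def shear (C : Matrix (Fin n) (Fin n) ℝ) : SympV n ≃ₗ[ℝ] SympV n where
  toFun p := (p.1, p.2 + C.mulVec p.1)
  invFun p := (p.1, p.2 - C.mulVec p.1)
  map_add' p q := by
    refine Prod.ext rfl ?_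
    show (p.2 + q.2) + C.mulVec (p.1 + q.1) = (p.2 + C.mulVec p.1) + (q.2 + C.mulVec q.1)
    rw [Matrix.mulVec_add]; abel
  map_smul' c p := by
    refine Prod.ext rfl ?_
    show c • p.2 + C.mulVec (c • p.1) = c • (p.2 + C.mulVec p.1)
    rw [Matrix.mulVec_smul, smul_add]
  left_inv p := by
    refine Prod.ext rfl ?_
    show (p.2 + C.mulVec p.1) - C.mulVec p.1 = p.2
    abel
  right_inv p := by
    refine Prod.ext rfl ?_
    show (p.2 - C.mulVec p.1) + C.mulVec p.1 = p.2
    abel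

@[simp] lemma shear_apply (C : Matrix (Fin n) (Fin n) ℝ) (p : SympV n) :
    shear C p = (p.1, p.2 + C.mulVec p.1) := rfl

lemma shear_symplectic {C : Matrix (Fin n) (Fin n) ℝ} (hC : C.IsSymm) :
    IsSymplectic n (shear C) := by
  intro u v
  rw [show (shear C) u = (u.1, u.2 + C.mulVec u.1) from rfl,
    show (shear C) v = (v.1, v.2 + C.mulVec v.1) from rfl]
  rw [stdOmega_eq_dot, stdOmega_eq_dot]
  simp only [dotProduct_add, add_dotProduct]
  rw [symm_dot hC]
  ring

lemma map_shear_graph (C A : Matrix (Fin n) (Fin n) ℝ) :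
    Submodule.map (shear C : SympV n →ₗ[ℝ] SympV n) (matGraph n A) = matGraph n (A + C) := by
  ext p
  rw [Submodule.mem_map, mem_matGraph]
  constructor
  · rintro ⟨q, hq, rfl⟩
    rw [mem_matGraph] at hq
    show q.2 + C.mulVec q.1 = (A + C).mulVec q.1
    rw [Matrix.add_mulVec, hq]
  · intro hp
    refine ⟨(p.1, A.mulVec p.1), mem_matGraph.2 rfl, ?_⟩
    show (p.1, A.mulVec p.1 + C.mulVec p.1) = p
    refine Prod.ext rfl ?_
    rw [hp, Matrix.add_mulVec]
  
lemma map_shear_infty (C : Matrix (Fin n) (Fin n) ℝ) :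
    Submodule.map (shear C : SympV n →ₗ[ℝ] SympV n) (lagInfty n) = lagInfty n := by
  ext p
  rw [Submodule.mem_map, mem_lagInfty]
  constructor
  · rintro ⟨q, hq, rfl⟩
    rw [mem_lagInfty] at hq
    exact hq
  · intro hp
    refine ⟨(p.1, p.2 - C.mulVec p.1), mem_lagInfty.2 hp, ?_⟩
    refine Prod.ext rfl ?_
    show (p.2 - C.mulVec p.1) + C.mulVec p.1 = p.2
    abel

/-- `(x,y) ↦ (B⁻¹y, -Bx)`. -/
noncomputable def jmap (B : Matrix (Fin n) (Fin n) ℝ) (hB : IsUnit B.det) : SympV n ≃ₗ[ℝ] SympV n where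
  toFun p := (B⁻¹.mulVec p.2, -(B.mulVec p.1))
  invFun p := (-(B⁻¹.mulVec p.2), B.mulVec p.1)
  map_add' p q := by
    refine Prod.ext ?_ ?_
    · show B⁻¹.mulVec (p.2 + q.2) = B⁻¹.mulVec p.2 + B⁻¹.mulVec q.2
      rw [Matrix.mulVec_add]
    · show -(B.mulVec (p.1 + q.1)) = -(B.mulVec p.1) + -(B.mulVec q.1)
      rw [Matrix.mulVec_add]; abel
  map_smul' c p := by
    refine Prod.ext ?_ ?_
    · show B⁻¹.mulVec (c • p.2) = c • (B⁻¹.mulVec p.2)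
      rw [Matrix.mulVec_smul]
    · show -(B.mulVec (c • p.1)) = c • -(B.mulVec p.1)
      rw [Matrix.mulVec_smul, smul_neg]
  left_inv p := by
    refine Prod.ext ?_ ?_
    · show -(B⁻¹.mulVec (-(B.mulVec p.1))) = p.1
      rw [Matrix.mulVec_neg, neg_neg, Matrix.mulVec_mulVec, Matrix.nonsing_inv_mul B hB,
        Matrix.one_mulVec]
    · show B.mulVec (B⁻¹.mulVec p.2) = p.2
      rw [Matrix.mulVec_mulVec, Matrix.mul_nonsing_inv B hB, Matrix.one_mulVec]
  right_inv p := by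
    refine Prod.ext ?_ ?_
    · show B⁻¹.mulVec (B.mulVec p.1) = p.1
      rw [Matrix.mulVec_mulVec, Matrix.nonsing_inv_mul B hB, Matrix.one_mulVec]
    · show -(B.mulVec (-(B⁻¹.mulVec p.2))) = p.2
      rw [Matrix.mulVec_neg, neg_neg, Matrix.mulVec_mulVec, Matrix.mul_nonsing_inv B hB,
        Matrix.one_mulVec]

lemma jmap_symplectic {B : Matrix (Fin n) (Fin n) ℝ} (hB : IsUnit B.det) (hs : B.IsSymm) :
    IsSymplectic n (jmap B hB) := by
  have hsinv : (B⁻¹).IsSymm := by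
    unfold Matrix.IsSymm
    rw [Matrix.transpose_nonsing_inv, hs.eq]
  intro u v
  rw [show (jmap B hB) u = (B⁻¹.mulVec u.2, -(B.mulVec u.1)) from rfl,
    show (jmap B hB) v = (B⁻¹.mulVec v.2, -(B.mulVec v.1)) from rfl]
  rw [stdOmega_eq_dot, stdOmega_eq_dot]
  simp only [dotProduct_neg, neg_dotProduct, sub_neg_eq_add]
  rw [symm_dot hsinv, symm_dot hs, Matrix.mulVec_mulVec, Matrix.mulVec_mulVec,
    Matrix.mul_nonsing_inv B hB, Matrix.nonsing_inv_mul B hB, Matrix.one_mulVec,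
    Matrix.one_mulVec]
  ring

lemma map_jmap_graph_ne {B : Matrix (Fin n) (Fin n) ℝ} (hB : IsUnit B.det)
    {lam : ℝ} (hlam : lam ≠ 0) :
    Submodule.map (jmap B hB : SympV n →ₗ[ℝ] SympV n) (matGraph n (lam • B)) =
      matGraph n ((-lam⁻¹) • B) := by
  ext p
  rw [Submodule.mem_map, mem_matGraph]
  constructor
  · rintro ⟨q, hq, rfl⟩
    rw [mem_matGraph] at hq
    show -(B.mulVec q.1) = ((-lam⁻¹) • B).mulVec (B⁻¹.mulVec q.2)
    simp only [hq, Matrix.smul_mulVec, Matrix.mulVec_smul, Matrix.mulVec_mulVec,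
      Matrix.nonsing_inv_mul B hB, Matrix.one_mulVec, smul_smul]
    rw [mul_neg, mul_inv_cancel₀ hlam, neg_smul, one_smul]
  · intro hp
    refine ⟨(lam⁻¹ • p.1, (lam • B).mulVec (lam⁻¹ • p.1)), mem_matGraph.2 rfl, ?_⟩
    show (B⁻¹.mulVec ((lam • B).mulVec (lam⁻¹ • p.1)), -(B.mulVec (lam⁻¹ • p.1))) = p
    refine Prod.ext ?_ ?_
    · show B⁻¹.mulVec ((lam • B).mulVec (lam⁻¹ • p.1)) = p.1
      simp only [Matrix.smul_mulVec, Matrix.mulVec_smul, Matrix.mulVec_mulVec,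
        Matrix.nonsing_inv_mul B hB, Matrix.one_mulVec, smul_smul]
      rw [inv_mul_cancel₀ hlam, one_smul]
    · show -(B.mulVec (lam⁻¹ • p.1)) = p.2
      rw [hp, Matrix.mulVec_smul, Matrix.smul_mulVec, neg_smul]

lemma map_jmap_graph_zero {B : Matrix (Fin n) (Fin n) ℝ} (hB : IsUnit B.det) :
    Submodule.map (jmap B hB : SympV n →ₗ[ℝ] SympV n) (matGraph n ((0:ℝ) • B)) =
      lagInfty n := by
  ext p
  rw [Submodule.mem_map, mem_lagInfty]
  constructor
  · rintro ⟨q, hq, rfl⟩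
    rw [mem_matGraph] at hq
    show B⁻¹.mulVec q.2 = 0
    rw [hq]
    rw [zero_smul, Matrix.zero_mulVec, Matrix.mulVec_zero]
  · intro hp
    refine ⟨(-(B⁻¹.mulVec p.2), 0), ?_, ?_⟩
    · rw [mem_matGraph]
      show (0:Fin n → ℝ) = ((0:ℝ) • B).mulVec _
      rw [zero_smul, Matrix.zero_mulVec]
    · show (B⁻¹.mulVec 0, -(B.mulVec (-(B⁻¹.mulVec p.2)))) = p
      refine Prod.ext ?_ ?_
      · show B⁻¹.mulVec 0 = p.1
        rw [Matrix.mulVec_zero, hp]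
      · show -(B.mulVec (-(B⁻¹.mulVec p.2))) = p.2
        rw [Matrix.mulVec_neg, neg_neg, Matrix.mulVec_mulVec, Matrix.mul_nonsing_inv B hB,
          Matrix.one_mulVec]

lemma map_jmap_infty {B : Matrix (Fin n) (Fin n) ℝ} (hB : IsUnit B.det) :
    Submodule.map (jmap B hB : SympV n →ₗ[ℝ] SympV n) (lagInfty n) =
      matGraph n ((0:ℝ) • B) := by
  ext p
  rw [Submodule.mem_map, mem_matGraph, zero_smul]
  constructor
  · rintro ⟨q, hq, rfl⟩
    rw [mem_lagInfty] at hq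
    show -(B.mulVec q.1) = Matrix.mulVec 0 _
    rw [hq, Matrix.mulVec_zero, Matrix.zero_mulVec, neg_zero]
  · intro hp
    refine ⟨(0, B.mulVec p.1), mem_lagInfty.2 rfl, ?_⟩
    show (B⁻¹.mulVec (B.mulVec p.1), -(B.mulVec 0)) = p
    refine Prod.ext ?_ ?_
    · show B⁻¹.mulVec (B.mulVec p.1) = p.1
      rw [Matrix.mulVec_mulVec, Matrix.nonsing_inv_mul B hB, Matrix.one_mulVec]
    · show -(B.mulVec 0) = p.2
      rw [Matrix.mulVec_zero, neg_zero, hp, Matrix.zero_mulVec]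

end SP4

namespace SP5
open SP SP2 SP4
variable {n : ℕ}

lemma image_trans (e k : SympV n ≃ₗ[ℝ] SympV n) (S : Set (Submodule ℝ (SympV n))) :
    (Submodule.map ((k.trans e) : SympV n →ₗ[ℝ] SympV n)) '' S =
      (Submodule.map (e : SympV n →ₗ[ℝ] SympV n)) ''
        ((Submodule.map (k : SympV n →ₗ[ℝ] SympV n)) '' S) := by
  rw [← Set.image_comp]
  exact Set.image_congr' (fun X => map_map k e X)

lemma image_model_shear {B : Matrix (Fin n) (Fin n) ℝ} (t : ℝ) :
    (Submodule.map ((shear (t • B)) : SympV n →ₗ[ℝ] SympV n)) '' model n B = model n B := by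
  unfold model
  rw [Set.image_union, Set.image_singleton, map_shear_infty]
  congr 1
  rw [← Set.range_comp]
  have h1 : ((Submodule.map ((shear (t • B)) : SympV n →ₗ[ℝ] SympV n)) ∘
      fun lam : ℝ => matGraph n (lam • B)) = fun lam : ℝ => matGraph n ((lam + t) • B) := by
    funext lam
    show Submodule.map _ (matGraph n (lam • B)) = _
    rw [map_shear_graph, add_smul]
  rw [h1]
  have h2 : (fun lam : ℝ => matGraph n ((lam + t) • B)) =
      (fun s : ℝ => matGraph n (s • B)) ∘ (fun lam : ℝ => lam + t) := rfl
  rw [h2]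
  exact Function.Surjective.range_comp (fun c => ⟨c - t, by ring⟩) _

lemma image_model_jmap {B : Matrix (Fin n) (Fin n) ℝ} (hB : IsUnit B.det) :
    (Submodule.map ((jmap B hB) : SympV n →ₗ[ℝ] SympV n)) '' model n B = model n B := by
  ext X
  constructor
  · rintro ⟨Y, hY, rfl⟩
    rcases hY with ⟨lam, rfl⟩ | hY
    · by_cases hlam : lam = 0
      · subst hlam
        rw [map_jmap_graph_zero hB]
        exact Or.inr rfl
      · rw [map_jmap_graph_ne hB hlam]
        exact Or.inl ⟨-lam⁻¹, rfl⟩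
    · rcases hY with rfl
      rw [map_jmap_infty hB]
      exact Or.inl ⟨0, rfl⟩
  · intro hX
    rcases hX with ⟨lam, rfl⟩ | hX
    · by_cases hlam : lam = 0
      · subst hlam
        exact ⟨lagInfty n, Or.inr rfl, map_jmap_infty hB⟩
      · refine ⟨matGraph n ((-lam⁻¹) • B), Or.inl ⟨-lam⁻¹, rfl⟩, ?_⟩
        rw [map_jmap_graph_ne hB (by simpa using hlam)]
        congr 2
        rw [inv_neg, inv_inv, neg_neg]
    · rcases hX with rfl
      exact ⟨matGraph n ((0:ℝ) • B), Or.inl ⟨0, rfl⟩, map_jmap_graph_zero hB⟩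

/-- Normalization: a circle through `L∞` and `Γ₀` can be written with a symplectic map
fixing both. -/
lemma normalize {B : Matrix (Fin n) (Fin n) ℝ} (hBs : B.IsSymm) (hBu : IsUnit B.det)
    (g : SympV n ≃ₗ[ℝ] SympV n) (hg : IsSymplectic n g)
    (hinf : lagInfty n ∈ (Submodule.map (g : SympV n →ₗ[ℝ] SympV n)) '' model n B)
    (h0 : matGraph n 0 ∈ (Submodule.map (g : SympV n →ₗ[ℝ] SympV n)) '' model n B) :
    ∃ g' : SympV n ≃ₗ[ℝ] SympV n, IsSymplectic n g' ∧
      (Submodule.map (g' : SympV n →ₗ[ℝ] SympV n)) '' model n B =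
        (Submodule.map (g : SympV n →ₗ[ℝ] SympV n)) '' model n B ∧
      Submodule.map (g' : SympV n →ₗ[ℝ] SympV n) (lagInfty n) = lagInfty n ∧
      Submodule.map (g' : SympV n →ₗ[ℝ] SympV n) (matGraph n 0) = matGraph n 0 := by
  -- Step A : arrange `map g₁ L∞ = L∞`.
  obtain ⟨g₁, hg₁, him₁, hfix₁⟩ : ∃ g₁ : SympV n ≃ₗ[ℝ] SympV n, IsSymplectic n g₁ ∧
      (Submodule.map (g₁ : SympV n →ₗ[ℝ] SympV n)) '' model n B =
        (Submodule.map (g : SympV n →ₗ[ℝ] SympV n)) '' model n B ∧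
      Submodule.map (g₁ : SympV n →ₗ[ℝ] SympV n) (lagInfty n) = lagInfty n := by
    obtain ⟨Y, hY, hmap⟩ := hinf
    rcases hY with ⟨lam, rfl⟩ | hY
    · -- `L∞ = map g Γ(lam B)` : compose with `shear ∘ jmap`
      set k : SympV n ≃ₗ[ℝ] SympV n := (jmap B hBu).trans (shear (lam • B)) with hk
      have hkmodel : (Submodule.map (k : SympV n →ₗ[ℝ] SympV n)) '' model n B = model n B := by
        rw [hk, image_trans, image_model_jmap hBu, image_model_shear]
      have hkinf : Submodule.map (k : SympV n →ₗ[ℝ] SympV n) (lagInfty n) =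
          matGraph n (lam • B) := by
        rw [hk, map_map, map_jmap_infty hBu, map_shear_graph, zero_smul, zero_add]
      refine ⟨k.trans g, symp_trans (symp_trans (jmap_symplectic hBu hBs)
        (shear_symplectic (hBs.smul lam))) hg, ?_, ?_⟩
      · rw [image_trans, hkmodel]
      · rw [map_map, hkinf, hmap]
    · rcases hY with rfl
      exact ⟨g, hg, rfl, hmap⟩
  -- Step B : also arrange `map g₂ Γ₀ = Γ₀`.
  rw [← him₁] at h0
  obtain ⟨Y, hY, hmap⟩ := h0
  rcases hY with ⟨lam, rfl⟩ | hY
  · set k : SympV n ≃ₗ[ℝ] SympV n := shear (lam • B) with hk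
    refine ⟨k.trans g₁, symp_trans (shear_symplectic (hBs.smul lam)) hg₁, ?_, ?_, ?_⟩
    · rw [image_trans, hk, image_model_shear, him₁]
    · rw [map_map, hk, map_shear_infty, hfix₁]
    · rw [map_map, hk, map_shear_graph, zero_add, hmap]
  · rcases hY with rfl
    refine ⟨g₁, hg₁, him₁, hfix₁, ?_⟩
    have e : lagInfty n = matGraph n 0 := hfix₁.symm.trans hmap
    rw [← e, hfix₁]

end SP5

namespace SP6
open SP SP2 SP4
variable {n : ℕ}

/-- A symplectic map fixing `L∞` and `Γ₀` sends the model circle of `B` to a model circle. -/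
lemma block {B : Matrix (Fin n) (Fin n) ℝ} (hBs : B.IsSymm) (hBu : IsUnit B.det)
    (g : SympV n ≃ₗ[ℝ] SympV n) (hg : IsSymplectic n g)
    (hinf : Submodule.map (g : SympV n →ₗ[ℝ] SympV n) (lagInfty n) = lagInfty n)
    (h0 : Submodule.map (g : SympV n →ₗ[ℝ] SympV n) (matGraph n 0) = matGraph n 0) :
    ∃ M : Matrix (Fin n) (Fin n) ℝ, M.IsSymm ∧ IsUnit M.det ∧
      (Submodule.map (g : SympV n →ₗ[ℝ] SympV n)) '' model n B = model n M := by
  classical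
  -- the diagonal blocks
  set A : (Fin n → ℝ) →ₗ[ℝ] (Fin n → ℝ) :=
    (LinearMap.fst ℝ (Fin n → ℝ) (Fin n → ℝ)).comp
      ((g : SympV n →ₗ[ℝ] SympV n).comp (LinearMap.inl ℝ _ _)) with hA
  set D : (Fin n → ℝ) →ₗ[ℝ] (Fin n → ℝ) :=
    (LinearMap.snd ℝ (Fin n → ℝ) (Fin n → ℝ)).comp
      ((g : SympV n →ₗ[ℝ] SympV n).comp (LinearMap.inr ℝ _ _)) with hD
  have hgx : ∀ x : Fin n → ℝ, g (x, 0) = (A x, 0) := by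
    intro x
    have hm : ((x, 0) : SympV n) ∈ matGraph n 0 :=
      mem_matGraph.2 (by rw [Matrix.zero_mulVec])
    have : g (x, 0) ∈ matGraph n 0 := by
      rw [← h0]; exact ⟨(x, 0), hm, rfl⟩
    have h2 : (g (x, 0)).2 = 0 := by
      have := mem_matGraph.1 this
      rw [this, Matrix.zero_mulVec]
    exact Prod.ext rfl h2
  have hgy : ∀ y : Fin n → ℝ, g (0, y) = (0, D y) := by
    intro y
    have hm : ((0, y) : SympV n) ∈ lagInfty n := mem_lagInfty.2 rfl
    have : g (0, y) ∈ lagInfty n := by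
      rw [← hinf]; exact ⟨(0, y), hm, rfl⟩
    exact Prod.ext (mem_lagInfty.1 this) rfl
  have hgsplit : ∀ p : SympV n, g p = (A p.1, D p.2) := by
    intro p
    have : p = ((p.1, 0) : SympV n) + (0, p.2) := by
      refine Prod.ext ?_ ?_ <;> simp
    rw [this, map_add, hgx, hgy]
    refine Prod.ext ?_ ?_ <;> simp
  have hAinj : Function.Injective A := by
    intro x y hxy
    have : g (x, 0) = g (y, 0) := by rw [hgx, hgx, hxy]
    exact congrArg Prod.fst (g.injective this)
  have hAsurj : Function.Surjective A := by
    intro u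
    have : ((u, 0) : SympV n) ∈ matGraph n 0 :=
      mem_matGraph.2 (by rw [Matrix.zero_mulVec])
    rw [← h0] at this
    obtain ⟨q, hq, hgq⟩ := this
    have hq2 : q.2 = 0 := by
      have := mem_matGraph.1 hq; rw [this, Matrix.zero_mulVec]
    have hq' : ((q.1, 0) : SympV n) = q := Prod.ext rfl hq2.symm
    have : g (q.1, 0) = (u, 0) := by rw [hq']; exact hgq
    rw [hgx] at this
    exact ⟨q.1, congrArg Prod.fst this⟩
  have hDinj : Function.Injective D := by
    intro x y hxy
    have : g (0, x) = g (0, y) := by rw [hgy, hgy, hxy]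
    exact congrArg Prod.snd (g.injective this)
  set Aeq : (Fin n → ℝ) ≃ₗ[ℝ] (Fin n → ℝ) := LinearEquiv.ofBijective A ⟨hAinj, hAsurj⟩
    with hAeq
  have hAeq_apply : ∀ x, Aeq x = A x := fun x => rfl
  -- the pairing identity
  have pair : ∀ x y : Fin n → ℝ, dotProduct (A x) (D y) = dotProduct x y := by
    intro x y
    have := hg (x, 0) (0, y)
    rw [hgx, hgy] at this
    rw [stdOmega_eq_dot, stdOmega_eq_dot] at this
    simpa using this
  -- the matrix M
  set M : Matrix (Fin n) (Fin n) ℝ :=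
    LinearMap.toMatrix' (D ∘ₗ B.mulVecLin ∘ₗ (Aeq.symm : (Fin n → ℝ) →ₗ[ℝ] (Fin n → ℝ)))
    with hM
  have hMmv : ∀ u, M.mulVec u = D (B.mulVec (Aeq.symm u)) := by
    intro u
    rw [← Matrix.toLin'_apply, hM, Matrix.toLin'_toMatrix']
    rfl
  -- graphs map to graphs
  have hgraph : ∀ lam : ℝ, Submodule.map (g : SympV n →ₗ[ℝ] SympV n)
      (matGraph n (lam • B)) = matGraph n (lam • M) := by
    intro lam
    ext p
    rw [Submodule.mem_map, mem_matGraph]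
    constructor
    · rintro ⟨q, hq, rfl⟩
      rw [mem_matGraph] at hq
      show ((g : SympV n →ₗ[ℝ] SympV n) q).2 = (lam • M).mulVec ((g : SympV n →ₗ[ℝ] SympV n) q).1
      have : (g : SympV n →ₗ[ℝ] SympV n) q = g q := rfl
      rw [this, hgsplit q, Matrix.smul_mulVec]
      show D q.2 = lam • M.mulVec (A q.1)
      rw [hMmv]
      have : Aeq.symm (A q.1) = q.1 := Aeq.symm_apply_apply q.1
      rw [this, hq, Matrix.smul_mulVec, map_smul]
    · intro hp
      set x := Aeq.symm p.1 with hx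
      refine ⟨(x, lam • B.mulVec x), mem_matGraph.2 (by rw [Matrix.smul_mulVec]), ?_⟩
      show g (x, lam • B.mulVec x) = p
      rw [hgsplit]
      show (A x, D (lam • B.mulVec x)) = p
      refine Prod.ext ?_ ?_
      · show A x = p.1
        exact Aeq.apply_symm_apply p.1
      · show D (lam • B.mulVec x) = p.2
        rw [map_smul, ← hMmv, ← Matrix.smul_mulVec, ← hp]
  -- the image of the model circle
  have himg : (Submodule.map (g : SympV n →ₗ[ℝ] SympV n)) '' model n B = model n M := by
    unfold model
    rw [Set.image_union, Set.image_singleton, hinf]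
    congr 1
    rw [← Set.range_comp]
    exact congrArg Set.range (funext fun lam => hgraph lam)
  -- symmetry of M
  have hdotM : ∀ u v, dotProduct u (M.mulVec v) = dotProduct v (M.mulVec u) := by
    intro u v
    have h1 : ∀ w z, dotProduct w (M.mulVec z) =
        dotProduct (Aeq.symm w) (B.mulVec (Aeq.symm z)) := by
      intro w z
      conv_lhs => rw [← Aeq.apply_symm_apply w]
      rw [hMmv, hAeq_apply, pair]
    rw [h1, h1]
    rw [symm_dot hBs, dotProduct_comm]
  have hMsymm : M.IsSymm := by
    unfold Matrix.IsSymm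
    ext i j
    rw [Matrix.transpose_apply]
    have := hdotM (Pi.single i 1) (Pi.single j 1)
    simpa [dotProduct_single, Matrix.mulVec_single] using this.symm
  -- invertibility of M
  have hMinj : Function.Injective M.mulVec := by
    intro u v huv
    have h1 : D (B.mulVec (Aeq.symm u)) = D (B.mulVec (Aeq.symm v)) := by
      rw [← hMmv, ← hMmv, huv]
    have h2 : B.mulVec (Aeq.symm u) = B.mulVec (Aeq.symm v) := hDinj h1
    have hBinj : Function.Injective B.mulVec :=
      Matrix.mulVec_injective_iff_isUnit.2 ((Matrix.isUnit_iff_isUnit_det B).2 hBu)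
    have h3 : Aeq.symm u = Aeq.symm v := hBinj h2
    exact Aeq.symm.injective h3
  have hMu : IsUnit M.det :=
    (Matrix.isUnit_iff_isUnit_det M).1 (Matrix.mulVec_injective_iff_isUnit.1 hMinj)
  exact ⟨M, hMsymm, hMu, himg⟩

end SP6

namespace SP7
open SP SP2
variable {n : ℕ}

/-- `Sp(2n,ℝ)` maps `(L∞, Γ₀)` onto any transverse pair of Lagrangians. -/
lemma pair_transitive {L2 L3 : Submodule ℝ (SympV n)} (hL2 : IsLagrangian n L2)
    (hL3 : IsLagrangian n L3) (h23 : IsCompl L2 L3) :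
    ∃ G : SympV n ≃ₗ[ℝ] SympV n, IsSymplectic n G ∧
      Submodule.map (G : SympV n →ₗ[ℝ] SympV n) (lagInfty n) = L2 ∧
      Submodule.map (G : SympV n →ₗ[ℝ] SympV n) (matGraph n 0) = L3 := by
  classical
  set b3 : Basis (Fin n) ℝ L3 := Module.finBasisOfFinrankEq ℝ L3 hL3.1 with hb3
  -- the pairing `L2 → Dual L3`
  set ψ : SympV n →ₗ[ℝ] Module.Dual ℝ L3 :=
    L3.subtype.dualMap.comp (omegaBilin n).flip with hψ
  set φ : L2 →ₗ[ℝ] Module.Dual ℝ L3 := ψ.comp L2.subtype with hφ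
  have hφ_apply : ∀ (f : L2) (e : L3), φ f e = stdOmega n (e : SympV n) (f : SympV n) :=
    fun f e => rfl
  have hφinj : Function.Injective φ := by
    rw [← LinearMap.ker_eq_bot, LinearMap.ker_eq_bot']
    intro f hf
    have hall : ∀ v : SympV n, stdOmega n v (f : SympV n) = 0 := by
      intro v
      have hv : v ∈ L2 ⊔ L3 := by rw [h23.sup_eq_top]; trivial
      rcases Submodule.mem_sup.1 hv with ⟨a, ha, b, hb, rfl⟩
      rw [omega_add_left]
      have h1 : stdOmega n a (f : SympV n) = 0 := hL2.2 a ha _ f.2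
      have h2 : stdOmega n b (f : SympV n) = 0 := by
        have := congrFun (congrArg DFunLike.coe hf) ⟨b, hb⟩
        simpa [hφ_apply] using this
      rw [h1, h2, add_zero]
    exact Subtype.ext (omega_nondeg _ hall)
  have hφsurj : Function.Surjective φ := by
    have hdim : finrank ℝ L2 = finrank ℝ (Module.Dual ℝ L3) := by
      rw [Subspace.dual_finrank_eq, hL2.1, hL3.1]
    exact (LinearMap.injective_iff_surjective_of_finrank_eq_finrank hdim).1 hφinj
  set Φeq : L2 ≃ₗ[ℝ] Module.Dual ℝ L3 := LinearEquiv.ofBijective φ ⟨hφinj, hφsurj⟩ with hΦ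
  -- the two halves of `G`
  set g1 : (Fin n → ℝ) →ₗ[ℝ] SympV n := L3.subtype.comp b3.equivFun.symm.toLinearMap with hg1
  set g2' : (Fin n → ℝ) →ₗ[ℝ] L2 :=
    (Φeq.symm : Module.Dual ℝ L3 →ₗ[ℝ] L2).comp b3.dualBasis.equivFun.symm.toLinearMap
    with hg2'
  set g2 : (Fin n → ℝ) →ₗ[ℝ] SympV n := L2.subtype.comp g2' with hg2
  have hg1mem : ∀ x, g1 x ∈ L3 := fun x => (b3.equivFun.symm x).2
  have hg2mem : ∀ y, g2 y ∈ L2 := fun y => (g2' y).2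
  have hφg2' : ∀ y, φ (g2' y) = b3.dualBasis.equivFun.symm y := by
    intro y
    show φ (Φeq.symm _) = _
    exact Φeq.apply_symm_apply _
  -- key pairing values
  have hpair : ∀ (e : L3) y, stdOmega n (e : SympV n) (g2 y) = φ (g2' y) e := fun e y => rfl
  have hval : ∀ i y, stdOmega n ((b3 i : L3) : SympV n) (g2 y) = y i := by
    intro i y
    rw [hpair, hφg2', Basis.equivFun_symm_apply]
    rw [LinearMap.sum_apply]
    simp only [LinearMap.smul_apply, Basis.dualBasis_apply_self, smul_eq_mul]
    simp [Finset.sum_ite_eq]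
  have homega12 : ∀ x y, stdOmega n (g1 x) (g2 y) = ∑ i, x i * y i := by
    intro x y
    have hg1x : g1 x = ((b3.equivFun.symm x : L3) : SympV n) := rfl
    rw [hg1x]
    have hrepr : (b3.equivFun.symm x : L3) = ∑ i, x i • b3 i := b3.equivFun_symm_apply x
    rw [hrepr]
    push_cast
    rw [show stdOmega n (∑ i, x i • ((b3 i : L3) : SympV n)) (g2 y)
        = omegaBilin n (∑ i, x i • ((b3 i : L3) : SympV n)) (g2 y) from rfl]
    rw [map_sum, LinearMap.sum_apply]
    refine Finset.sum_congr rfl fun i _ => ?_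
    rw [map_smul, LinearMap.smul_apply, smul_eq_mul, omegaBilin_apply, hval]
  -- the linear map `G₀`
  set G0 : SympV n →ₗ[ℝ] SympV n :=
    g1.comp (LinearMap.fst ℝ _ _) + g2.comp (LinearMap.snd ℝ _ _) with hG0
  have hG0_apply : ∀ p : SympV n, G0 p = g1 p.1 + g2 p.2 := fun p => rfl
  have hg1inj : Function.Injective g1 := by
    intro a b hab
    have h1 : b3.equivFun.symm a = b3.equivFun.symm b := Subtype.ext hab
    exact b3.equivFun.symm.injective h1
  have hg2inj : Function.Injective g2 := by
    intro a b hab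
    have h1 : g2' a = g2' b := Subtype.ext hab
    have h2 : b3.dualBasis.equivFun.symm a = b3.dualBasis.equivFun.symm b :=
      Φeq.symm.injective h1
    exact b3.dualBasis.equivFun.symm.injective h2
  have hG0inj : Function.Injective G0 := by
    rw [← LinearMap.ker_eq_bot, LinearMap.ker_eq_bot']
    intro p hp
    rw [hG0_apply] at hp
    have h1 : g1 p.1 = -(g2 p.2) := by
      rw [← add_eq_zero_iff_eq_neg]; exact hp
    have h2 : g1 p.1 ∈ L2 := by
      rw [h1]; exact neg_mem (hg2mem p.2)
    have h3 : g1 p.1 = 0 := Submodule.disjoint_def.1 h23.disjoint _ h2 (hg1mem p.1)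
    have h4 : g2 p.2 = 0 := by
      rw [h3] at h1; rw [← neg_eq_zero, ← h1]
    have e1 : p.1 = 0 := hg1inj (by rw [h3, map_zero])
    have e2 : p.2 = 0 := hg2inj (by rw [h4, map_zero])
    exact Prod.ext e1 e2
  have hG0bij : Function.Bijective G0 :=
    ⟨hG0inj, (LinearMap.injective_iff_surjective).1 hG0inj⟩
  set G : SympV n ≃ₗ[ℝ] SympV n := LinearEquiv.ofBijective G0 hG0bij with hG
  have hGcoe : (G : SympV n →ₗ[ℝ] SympV n) = G0 := rfl
  refine ⟨G, ?_, ?_, ?_⟩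
  · -- symplectic
    intro u v
    rw [show G u = G0 u from rfl, show G v = G0 v from rfl, hG0_apply, hG0_apply]
    rw [omega_add_left, omega_add_right, omega_add_right]
    have e11 : stdOmega n (g1 u.1) (g1 v.1) = 0 := hL3.2 _ (hg1mem _) _ (hg1mem _)
    have e22 : stdOmega n (g2 u.2) (g2 v.2) = 0 := hL2.2 _ (hg2mem _) _ (hg2mem _)
    have e12 : stdOmega n (g1 u.1) (g2 v.2) = ∑ i, u.1 i * v.2 i := homega12 _ _
    have e21 : stdOmega n (g2 u.2) (g1 v.1) = -∑ i, u.2 i * v.1 i := by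
      rw [omega_neg, homega12]
      congr 1
      exact Finset.sum_congr rfl fun i _ => mul_comm _ _
    rw [e11, e22, e12, e21, stdOmega]
    ring
  · -- L∞ ↦ L2
    ext v
    rw [Submodule.mem_map]
    constructor
    · rintro ⟨q, hq, rfl⟩
      rw [hGcoe, hG0_apply, mem_lagInfty.1 hq, map_zero, zero_add]
      exact hg2mem q.2
    · intro hv
      refine ⟨(0, b3.dualBasis.equivFun (Φeq ⟨v, hv⟩)), mem_lagInfty.2 rfl, ?_⟩
      rw [hGcoe, hG0_apply]
      show g1 0 + g2 (b3.dualBasis.equivFun (Φeq ⟨v, hv⟩)) = v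
      rw [map_zero, zero_add]
      show (L2.subtype (g2' (b3.dualBasis.equivFun (Φeq ⟨v, hv⟩)))) = v
      have hval2 : g2' (b3.dualBasis.equivFun (Φeq ⟨v, hv⟩)) = ⟨v, hv⟩ := by
        show Φeq.symm (b3.dualBasis.equivFun.symm (b3.dualBasis.equivFun (Φeq ⟨v, hv⟩))) = _
        rw [LinearEquiv.symm_apply_apply, LinearEquiv.symm_apply_apply]
      rw [hval2]
      rfl
  · -- Γ₀ ↦ L3
    ext v
    rw [Submodule.mem_map]
    constructor
    · rintro ⟨q, hq, rfl⟩
      have h2 : q.2 = 0 := by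
        have := mem_matGraph.1 hq; rw [this, Matrix.zero_mulVec]
      rw [hGcoe, hG0_apply, h2, map_zero, add_zero]
      exact hg1mem q.1
    · intro hv
      refine ⟨(b3.equivFun ⟨v, hv⟩, 0), mem_matGraph.2 (by rw [Matrix.zero_mulVec]), ?_⟩
      rw [hGcoe, hG0_apply]
      show g1 (b3.equivFun ⟨v, hv⟩) + g2 0 = v
      rw [map_zero, add_zero]
      show (L3.subtype (b3.equivFun.symm (b3.equivFun ⟨v, hv⟩))) = v
      rw [LinearEquiv.symm_apply_apply]
      rfl

end SP7

namespace SP8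
open SP SP2 SP3 SP4 SP5 SP6 SP7
variable {n : ℕ}

lemma circle_eq_image (g : SympV n ≃ₗ[ℝ] SympV n) (B : Matrix (Fin n) (Fin n) ℝ) :
    ((Set.range fun lam : ℝ =>
        Submodule.map (g : SympV n →ₗ[ℝ] SympV n) (matGraph n (lam • B))) ∪
      {Submodule.map (g : SympV n →ₗ[ℝ] SympV n) (lagInfty n)}) =
    (Submodule.map (g : SympV n →ₗ[ℝ] SympV n)) '' model n B := by
  show _ = (Submodule.map (g : SympV n →ₗ[ℝ] SympV n)) ''
    ((Set.range fun lam : ℝ => matGraph n (lam • B)) ∪ {lagInfty n})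
  rw [Set.image_union, Set.image_singleton, ← Set.range_comp]
  rfl

lemma image_roundtrip (e : SympV n ≃ₗ[ℝ] SympV n) (S : Set (Submodule ℝ (SympV n))) :
    (Submodule.map (e : SympV n →ₗ[ℝ] SympV n)) ''
      ((Submodule.map (e.symm : SympV n →ₗ[ℝ] SympV n)) '' S) = S := by
  rw [← Set.image_comp]
  have h1 : ∀ X, ((Submodule.map (e : SympV n →ₗ[ℝ] SympV n)) ∘
      (Submodule.map (e.symm : SympV n →ₗ[ℝ] SympV n))) X = X := by
    intro X
    have := map_symm_map e.symm X
    rwa [LinearEquiv.symm_symm] at this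
  rw [Set.image_congr' h1]
  exact Set.image_id S

lemma model_smul_eq (M : Matrix (Fin n) (Fin n) ℝ) {lam : ℝ} (hlam : lam ≠ 0) :
    model n (lam • M) = model n M := by
  unfold model
  congr 1
  have h1 : (fun mu : ℝ => matGraph n (mu • lam • M)) =
      (fun s : ℝ => matGraph n (s • M)) ∘ (fun mu : ℝ => mu * lam) := by
    funext mu
    show matGraph n (mu • lam • M) = matGraph n ((mu * lam) • M)
    rw [smul_smul]
  rw [h1]
  exact Function.Surjective.range_comp (fun c => ⟨c / lam, div_mul_cancel₀ c hlam⟩) _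

lemma matGraph_inj {A B : Matrix (Fin n) (Fin n) ℝ} (h : matGraph n A = matGraph n B) :
    A = B := by
  ext i j
  have h1 : ((Pi.single j 1, A.mulVec (Pi.single j 1)) : SympV n) ∈ matGraph n A :=
    mem_matGraph.2 rfl
  rw [h] at h1
  have h2 := mem_matGraph.1 h1
  have h3 := congrFun h2 i
  simpa [Matrix.mulVec_single] using h3

lemma key (hn : 0 < n) {B1 : Matrix (Fin n) (Fin n) ℝ} (hB1u : IsUnit B1.det)
    {T : Set (Submodule ℝ (SympV n))}
    (hT : ∃ h : SympV n ≃ₗ[ℝ] SympV n, IsSymplectic n h ∧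
      ∃ B : Matrix (Fin n) (Fin n) ℝ, B.IsSymm ∧ IsUnit B.det ∧
        T = (Submodule.map (h : SympV n →ₗ[ℝ] SympV n)) '' model n B)
    (hinf : lagInfty n ∈ T) (h0 : matGraph n 0 ∈ T)
    (hB1m : matGraph n B1 ∈ T) : T = model n B1 := by
  obtain ⟨h, hhs, B, hBs, hBu, rfl⟩ := hT
  obtain ⟨g', hg's, him, hfinf, hf0⟩ := SP5.normalize hBs hBu h hhs hinf h0
  obtain ⟨M, hMs, hMu, himM⟩ := SP6.block hBs hBu g' hg's hfinf hf0
  have hTM : (Submodule.map (h : SympV n →ₗ[ℝ] SympV n)) '' model n B = model n M := by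
    rw [← him, himM]
  rw [hTM]
  rw [hTM] at hB1m
  rcases hB1m with ⟨lam, heq⟩ | heq
  · -- `Γ_{B1} = Γ_{lam M}`
    have hBM : B1 = lam • M := (matGraph_inj heq).symm
    have hlam : lam ≠ 0 := by
      intro h0'
      rw [h0', zero_smul] at hBM
      rw [hBM] at hB1u
      have : (0 : Matrix (Fin n) (Fin n) ℝ).det = 0 :=
        by haveI : Nonempty (Fin n) := ⟨⟨0, hn⟩⟩; exact Matrix.det_zero
      rw [this] at hB1u
      exact not_isUnit_zero hB1u
    rw [hBM, model_smul_eq M hlam]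
  · -- `Γ_{B1} = L∞` : impossible for `n ≥ 1`
    exfalso
    have h1 : ((Pi.single (⟨0, hn⟩ : Fin n) 1,
        B1.mulVec (Pi.single (⟨0, hn⟩ : Fin n) 1)) : SympV n) ∈ matGraph n B1 :=
      mem_matGraph.2 rfl
    rw [Set.mem_singleton_iff] at heq
    rw [heq] at h1
    have h2 := mem_lagInfty.1 h1
    have h3 := congrFun h2 ⟨0, hn⟩
    simp [Pi.single_apply] at h3

end SP8

open SP SP2 SP3 SP4 SP5 SP6 SP7 SP8 in
theorem stmt16 (n : ℕ) (L1 L2 L3 : Submodule ℝ (SympV n))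
    (hL1 : IsLagrangian n L1) (hL2 : IsLagrangian n L2) (hL3 : IsLagrangian n L3)
    (h12 : IsCompl L1 L2) (h13 : IsCompl L1 L3) (h23 : IsCompl L2 L3) :
    -- (a) existence of a circle through `L1, L2, L3`
    (∃ S : Set (Submodule ℝ (SympV n)), IsCircle n S ∧ L1 ∈ S ∧ L2 ∈ S ∧ L3 ∈ S) ∧
    -- (b) uniqueness
    (∀ S S' : Set (Submodule ℝ (SympV n)), IsCircle n S → IsCircle n S' →
      L1 ∈ S → L2 ∈ S → L3 ∈ S → L1 ∈ S' → L2 ∈ S' → L3 ∈ S' → S = S') := by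
  obtain ⟨G, hGs, hGinf, hG0⟩ := SP7.pair_transitive hL2 hL3 h23
  have hGsymm : IsSymplectic n G.symm := symp_symm hGs
  have hsymm2 : Submodule.map (G.symm : SympV n →ₗ[ℝ] SympV n) L2 = lagInfty n := by
    rw [← hGinf]; exact map_symm_map G (lagInfty n)
  have hsymm3 : Submodule.map (G.symm : SympV n →ₗ[ℝ] SympV n) L3 = matGraph n 0 := by
    rw [← hG0]; exact map_symm_map G (matGraph n 0)
  have hK1lag : IsLagrangian n (Submodule.map (G.symm : SympV n →ₗ[ℝ] SympV n) L1) :=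
    lagrangian_map hGsymm hL1
  have hK1inf : IsCompl (Submodule.map (G.symm : SympV n →ₗ[ℝ] SympV n) L1) (lagInfty n) := by
    have := isCompl_map G.symm h12; rwa [hsymm2] at this
  have hK10 : IsCompl (Submodule.map (G.symm : SympV n →ₗ[ℝ] SympV n) L1) (matGraph n 0) := by
    have := isCompl_map G.symm h13; rwa [hsymm3] at this
  obtain ⟨B1, hB1s, hK1G⟩ := SP3.exists_graph hK1lag hK1inf
  have hB1u : IsUnit B1.det := SP3.graph_unit (hK1G ▸ hK10)
  have hL1G : Submodule.map (G : SympV n →ₗ[ℝ] SympV n) (matGraph n B1) = L1 := by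
    rw [← hK1G]
    have := map_symm_map G.symm L1
    rwa [LinearEquiv.symm_symm] at this
  constructor
  · -- existence
    refine ⟨(Set.range fun lam : ℝ =>
        Submodule.map (G : SympV n →ₗ[ℝ] SympV n) (matGraph n (lam • B1))) ∪
        {Submodule.map (G : SympV n →ₗ[ℝ] SympV n) (lagInfty n)},
      ⟨G, hGs, B1, hB1s, hB1u, rfl⟩, ?_, ?_, ?_⟩
    · refine Set.mem_union_left _ ⟨1, ?_⟩
      show Submodule.map (G : SympV n →ₗ[ℝ] SympV n) (matGraph n ((1:ℝ) • B1)) = L1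
      rw [one_smul, hL1G]
    · exact Set.mem_union_right _ (Set.mem_singleton_iff.2 hGinf.symm)
    · refine Set.mem_union_left _ ⟨0, ?_⟩
      show Submodule.map (G : SympV n →ₗ[ℝ] SympV n) (matGraph n ((0:ℝ) • B1)) = L3
      rw [zero_smul, hG0]
  · -- uniqueness
    intro S S' hC hC' m1 m2 m3 m1' m2' m3'
    rcases Nat.eq_zero_or_pos n with hn | hn
    · subst hn
      have hsub : ∀ X Y : Submodule ℝ (SympV 0), X = Y := by
        intro X Y
        ext p
        have hp : p = 0 :=
          Prod.ext (funext fun i => i.elim0) (funext fun i => i.elim0)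
        rw [hp]
        simp
      ext X
      rw [hsub X L1]
      exact iff_of_true m1 m1'
    · have hmain : ∀ T0 : Set (Submodule ℝ (SympV n)), IsCircle n T0 →
          L1 ∈ T0 → L2 ∈ T0 → L3 ∈ T0 →
          (Submodule.map (G.symm : SympV n →ₗ[ℝ] SympV n)) '' T0 = model n B1 := by
        intro T0 hT0 q1 q2 q3
        obtain ⟨g, hgs, B, hBs, hBu, rfl⟩ := hT0
        rw [SP8.circle_eq_image g B] at q1 q2 q3 ⊢
        refine SP8.key hn hB1u ?_ ?_ ?_ ?_
        · exact ⟨g.trans G.symm, symp_trans hgs hGsymm, B, hBs, hBu,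
            (image_trans G.symm g (model n B)).symm⟩
        · have := Set.mem_image_of_mem
            (Submodule.map (G.symm : SympV n →ₗ[ℝ] SympV n)) q2
          rwa [hsymm2] at this
        · have := Set.mem_image_of_mem
            (Submodule.map (G.symm : SympV n →ₗ[ℝ] SympV n)) q3
          rwa [hsymm3] at this
        · have := Set.mem_image_of_mem
            (Submodule.map (G.symm : SympV n →ₗ[ℝ] SympV n)) q1
          rwa [hK1G] at this
      have e1 := hmain S hC m1 m2 m3
      have e2 := hmain S' hC' m1' m2' m3'
      have e3 : (Submodule.map (G.symm : SympV n →ₗ[ℝ] SympV n)) '' S =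
          (Submodule.map (G.symm : SympV n →ₗ[ℝ] SympV n)) '' S' := e1.trans e2.symm
      calc S = (Submodule.map (G : SympV n →ₗ[ℝ] SympV n)) ''
            ((Submodule.map (G.symm : SympV n →ₗ[ℝ] SympV n)) '' S) :=
          (image_roundtrip G S).symm
        _ = (Submodule.map (G : SympV n →ₗ[ℝ] SympV n)) ''
            ((Submodule.map (G.symm : SympV n →ₗ[ℝ] SympV n)) '' S') := by rw [e3]
        _ = S' := image_roundtrip G S'
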